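/- Let θ, φ ∈ ℝ with φ ≠ 0, and define p = (−(e^θ+1)e^φ + √(e^{2φ}(e^θ+1)² + 4e^{θ+φ}(1−e^φ))) / (2e^θ(1−e^φ)). Then the quantity under the square root is nonnegative, 0 < p < 1, 0 < p·e^θ < 1, and log((p · p e^θ)/((1−p)(1−p e^θ))) = φ. That is, (p, p e^θ) is the inverse image of (θ, φ) under the map (p₀,p₁) ↦ (log(p₁/p₀), log odds product). -/

import Mathlib

open Real

private lemma rr_aux (a b p : ℝ) (ha : 0 < a) (hb : 0 < b) (hb1 : b ≠ 1)
    (hp : p = (-(a + 1) * b +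
        Real.sqrt (b ^ 2 * (a + 1) ^ 2 + 4 * (a * b) * (1 - b))) / (2 * a * (1 - b))) :
    0 < p ∧ p < 1 ∧ 0 < p * a ∧ p * a < 1 ∧
      (p * (p * a)) / ((1 - p) * (1 - p * a)) = b := by
  have hDpos : 0 < b ^ 2 * (a + 1) ^ 2 + 4 * (a * b) * (1 - b) := by
    nlinarith [sq_nonneg (b * (a - 1)), mul_pos ha hb]
  set s := Real.sqrt (b ^ 2 * (a + 1) ^ 2 + 4 * (a * b) * (1 - b)) with hs
  have hs2 : s ^ 2 = b ^ 2 * (a + 1) ^ 2 + 4 * (a * b) * (1 - b) := Real.sq_sqrt hDpos.le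
  have hs0 : 0 < s := Real.sqrt_pos.2 hDpos
  have hb1' : (1 : ℝ) - b ≠ 0 := sub_ne_zero.2 (Ne.symm hb1)
  have hkey : a * (1 - b) * p ^ 2 + b * (1 + a) * p - b = 0 := by
    rw [hp]; field_simp
    linear_combination hs2
  have hmain : 0 < p ∧ p < 1 ∧ p * a < 1 := by
    rcases lt_or_gt_of_ne hb1 with hblt | hbgt
    · -- b < 1
      have hden : 0 < 2 * a * (1 - b) := by nlinarith [mul_pos ha (sub_pos.2 hblt)]
      have hnum : 0 < -(a + 1) * b + s := by
        nlinarith [hs2, hs0, mul_pos ha hb, mul_pos (mul_pos ha hb) (sub_pos.2 hblt)]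
      have hp0 : 0 < p := by rw [hp]; exact div_pos hnum hden
      have hp1 : p < 1 := by
        rw [hp, div_lt_one hden]
        nlinarith [hs2, hs0, mul_pos ha hb, sq_nonneg a]
      have hq1 : p * a < 1 := by
        have hq : p * a = (-(a + 1) * b + s) / (2 * (1 - b)) := by
          rw [hp]; field_simp
        rw [hq, div_lt_one (by nlinarith : (0:ℝ) < 2 * (1 - b))]
        nlinarith [hs2, hs0, mul_pos ha hb]
      exact ⟨hp0, hp1, hq1⟩
    · -- b > 1
      have hden : 2 * a * (1 - b) < 0 := by nlinarith
      have hnum : -(a + 1) * b + s < 0 := by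
        nlinarith [hs2, hs0, mul_pos ha hb, mul_pos (mul_pos ha hb) (sub_pos.2 hbgt)]
      have hp0 : 0 < p := by rw [hp]; exact div_pos_of_neg_of_neg hnum hden
      have hp1 : p < 1 := by
        rw [hp, div_lt_one_iff]
        right; right
        refine ⟨hden, ?_⟩
        nlinarith [hs2, hs0, sq_nonneg a, mul_pos ha (sub_pos.2 hbgt)]
      have hq1 : p * a < 1 := by
        have hq : p * a = (-(a + 1) * b + s) / (2 * (1 - b)) := by
          rw [hp]; field_simp
        rw [hq, div_lt_one_iff]
        right; right
        refine ⟨by nlinarith, ?_⟩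
        nlinarith [hs2, hs0, sub_pos.2 hbgt]
      exact ⟨hp0, hp1, hq1⟩
  obtain ⟨hp0, hp1, hq1⟩ := hmain
  have hq0 : 0 < p * a := mul_pos hp0 ha
  refine ⟨hp0, hp1, hq0, hq1, ?_⟩
  have hrel : p * (p * a) = b * ((1 - p) * (1 - p * a)) := by linear_combination hkey
  have hX : (1 - p) * (1 - p * a) ≠ 0 :=
    ne_of_gt (mul_pos (sub_pos.2 hp1) (sub_pos.2 hq1))
  rw [hrel, mul_div_assoc, div_self hX, mul_one]

/-- The closed-form inverse map for the (log relative risk, log odds product)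
parameterization: for `θ, φ ∈ ℝ` with `φ ≠ 0`, the displayed `p` satisfies
`0 < p < 1`, `0 < p·e^θ < 1`, the quantity under the square root is nonnegative,
and the log odds product of `(p, p·e^θ)` equals `φ`. -/
theorem rr_inverse_map (θ φ : ℝ) (hφ : φ ≠ 0) :
    0 ≤ exp (2 * φ) * (exp θ + 1) ^ 2 + 4 * exp (θ + φ) * (1 - exp φ) ∧
    (let p : ℝ :=
      (-(exp θ + 1) * exp φ +
        Real.sqrt (exp (2 * φ) * (exp θ + 1) ^ 2 + 4 * exp (θ + φ) * (1 - exp φ))) /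
      (2 * exp θ * (1 - exp φ));
     0 < p ∧ p < 1 ∧ 0 < p * exp θ ∧ p * exp θ < 1 ∧
       Real.log ((p * (p * exp θ)) / ((1 - p) * (1 - p * exp θ))) = φ) := by
  have ha := exp_pos θ
  have hb := exp_pos φ
  have hb1 : exp φ ≠ 1 := by
    intro h
    exact hφ (by rwa [Real.exp_eq_one_iff] at h)
  have hE : exp (2 * φ) * (exp θ + 1) ^ 2 + 4 * exp (θ + φ) * (1 - exp φ)
      = (exp φ) ^ 2 * (exp θ + 1) ^ 2 + 4 * (exp θ * exp φ) * (1 - exp φ) := by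
    rw [two_mul, exp_add, exp_add]; ring
  rw [hE]
  have hDpos : 0 < (exp φ) ^ 2 * (exp θ + 1) ^ 2 + 4 * (exp θ * exp φ) * (1 - exp φ) := by
    nlinarith [sq_nonneg (exp φ * (exp θ - 1)), mul_pos ha hb]
  refine ⟨hDpos.le, ?_⟩
  intro p
  obtain ⟨h1, h2, h3, h4, h5⟩ := rr_aux (exp θ) (exp φ) p ha hb hb1 rfl
  exact ⟨h1, h2, h3, h4, by rw [h5, Real.log_exp]⟩
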